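/- Define E_{n,q}^{(h,r)}(x) := \frac{(1+q)^r}{(1-q)^n} \sum_{l=0}^n \binom{n}{l} \frac{(-q^x)^l}{\prod_{j=0}^{r-1}(1+q^{h-r+l+1+j})}. Then for all real x, y and all n ≥ 0, E_{n,q}^{(h,r)}(x+y) = \sum_{i=0}^{n} \binom{n}{i} q^{i x} E_{i,q}^{(h,r)}(y) [x]_q^{n-i}. -/

import Mathlib

noncomputable def qnum (q x : ℝ) : ℝ := (1 - q ^ x) / (1 - q)

/-- The (h,q)-extension of higher-order Euler polynomials, by the finite closed formula. -/
noncomputable def qE (q : ℝ) (h : ℤ) (r n : ℕ) (x : ℝ) : ℝ :=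
  (1 + q) ^ r / (1 - q) ^ n *
    ∑ l ∈ Finset.range (n + 1), (n.choose l : ℝ) * (-(q ^ x)) ^ l /
      ∏ j ∈ Finset.range r, (1 + q ^ (h - r + l + 1 + j))

theorem qE_add (q : ℝ) (hq0 : 0 < q) (hq1 : q < 1) (h : ℤ) (r : ℕ) (hr : 0 < r)
    (n : ℕ) (x y : ℝ) :
    qE q h r n (x + y) =
      ∑ i ∈ Finset.range (n + 1),
        (n.choose i : ℝ) * q ^ ((i : ℝ) * x) * qE q h r i y * (qnum q x) ^ (n - i) := by
  have hq0' : (0:ℝ) ≤ q := hq0.le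
  -- key combinatorial identity
  have key : ∀ l, l ≤ n → ∑ i ∈ Finset.Icc l n,
      (n.choose i : ℝ) * (i.choose l : ℝ) * q ^ ((i:ℝ) * x) * (1 - q ^ x) ^ (n - i)
      = (n.choose l : ℝ) * q ^ ((l:ℝ) * x) := by
    intro l hl
    rw [← Finset.Ico_add_one_right_eq_Icc, Finset.sum_Ico_eq_sum_range]
    rw [show n + 1 - l = (n - l) + 1 by omega]
    have hcong : ∀ k ∈ Finset.range (n - l + 1),
        (n.choose (l+k) : ℝ) * ((l+k).choose l : ℝ) * q ^ (((l+k:ℕ):ℝ) * x)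
            * (1 - q ^ x) ^ (n - (l+k))
        = ((n.choose l : ℝ) * q ^ ((l:ℝ)*x)) *
            ((q ^ x) ^ k * (1 - q ^ x) ^ ((n-l) - k) * ((n-l).choose k : ℝ)) := by
      intro k hk
      have hk' : k ≤ n - l := Nat.lt_succ_iff.mp (Finset.mem_range.mp hk)
      have hc : (n.choose (l+k)) * ((l+k).choose l) = (n.choose l) * ((n-l).choose k) := by
        have := Nat.choose_mul (k := l + k) (s := l) (n := n) (by omega)
        simpa using this
      have he : q ^ (((l+k:ℕ):ℝ) * x) = q ^ ((l:ℝ)*x) * (q ^ x) ^ k := by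
        rw [← Real.rpow_natCast (q^x) k, ← Real.rpow_mul hq0', ← Real.rpow_add hq0]
        push_cast
        ring_nf
      have hn2 : n - (l+k) = (n-l) - k := by omega
      have hc' : (n.choose (l+k) : ℝ) * ((l+k).choose l : ℝ)
          = (n.choose l : ℝ) * ((n-l).choose k : ℝ) := by exact_mod_cast hc
      rw [hn2, he]
      calc (n.choose (l+k) : ℝ) * ((l+k).choose l : ℝ) * (q ^ ((l:ℝ)*x) * (q^x)^k)
            * (1 - q ^ x) ^ ((n-l) - k)
          = ((n.choose (l+k) : ℝ) * ((l+k).choose l : ℝ)) *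
              (q ^ ((l:ℝ)*x) * ((q^x)^k * (1 - q^x)^((n-l)-k))) := by ring
        _ = ((n.choose l : ℝ) * ((n-l).choose k : ℝ)) *
              (q ^ ((l:ℝ)*x) * ((q^x)^k * (1 - q^x)^((n-l)-k))) := by rw [hc']
        _ = _ := by ring
    rw [Finset.sum_congr rfl hcong, ← Finset.mul_sum, ← add_pow]
    simp
  -- rewrite LHS
  have hL : qE q h r n (x + y) =
      (1+q)^r / (1-q)^n * ∑ l ∈ Finset.range (n+1),
        (n.choose l : ℝ) * q ^ ((l:ℝ)*x) *
          ((-(q ^ y)) ^ l / ∏ j ∈ Finset.range r, (1 + q ^ (h - r + l + 1 + j))) := by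
    rw [qE]
    congr 1
    refine Finset.sum_congr rfl fun l _ => ?_
    have hxy : q ^ (x + y) = q ^ x * q ^ y := Real.rpow_add hq0 x y
    have hql : q ^ ((l:ℝ)*x) = (q ^ x) ^ l := by
      rw [← Real.rpow_natCast (q^x) l, ← Real.rpow_mul hq0']
      ring_nf
    rw [hxy, hql, show -(q ^ x * q ^ y) = q ^ x * (-(q ^ y)) by ring, mul_pow]
    ring
  -- rewrite RHS terms
  have hR : ∀ i ∈ Finset.range (n+1),
      (n.choose i : ℝ) * q ^ ((i : ℝ) * x) * qE q h r i y * (qnum q x) ^ (n - i)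
      = (1+q)^r / (1-q)^n * ∑ l ∈ Finset.range (i+1),
          ((n.choose i : ℝ) * (i.choose l : ℝ) * q ^ ((i:ℝ)*x) * (1 - q ^ x) ^ (n-i))
            * ((-(q ^ y)) ^ l / ∏ j ∈ Finset.range r, (1 + q ^ (h - r + l + 1 + j))) := by
    intro i hi
    have hi' : i ≤ n := Nat.lt_succ_iff.mp (Finset.mem_range.mp hi)
    rw [qE, qnum, div_pow]
    rw [show ((1:ℝ) - q)^n = (1-q)^i * (1-q)^(n-i) by rw [← pow_add]; congr 1; omega]
    rw [Finset.mul_sum, Finset.mul_sum, Finset.mul_sum, Finset.sum_mul]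
    refine Finset.sum_congr rfl fun l _ => ?_
    ring
  rw [hL, Finset.sum_congr rfl hR, ← Finset.mul_sum]
  congr 1
  rw [Finset.sum_comm' (t' := Finset.range (n+1)) (s' := fun l => Finset.Icc l n)
    (by intro i l; simp only [Finset.mem_range, Finset.mem_Icc]; omega)]
  refine Finset.sum_congr rfl fun l hl => ?_
  have hl' : l ≤ n := Nat.lt_succ_iff.mp (Finset.mem_range.mp hl)
  rw [← Finset.sum_mul, key l hl']
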